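/- Non-uniform strong convergence of CM1: for every x₀ ∈ (0,1) and n ≥ 1, the total variation distance between μ_n = pⁿ(x₀,·) and the Dirac measure δ₀ equals x₀^{2ⁿ−1}; hence ‖μ_n − δ₀‖ → 0 as n → ∞ for each fixed x₀ ∈ (0,1), but for each n ≥ 1, sup_{x₀ ∈ (0,1)} ‖μ_n − δ₀‖ = 1, so the convergence is not uniform in x₀. -/

import Mathlib

open MeasureTheory Set Filter Topology Function

/-- A bounded finitely additive set function on the σ-algebra. -/
def IsFinAdd {X : Type*} [MeasurableSpace X] (μ : Set X → ℝ) : Prop :=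
  μ ∅ = 0 ∧ ∀ E F : Set X, MeasurableSet E → MeasurableSet F → Disjoint E F →
    μ (E ∪ F) = μ E + μ F

/-- Nonnegativity on measurable sets. -/
def IsNonnegSF {X : Type*} [MeasurableSpace X] (μ : Set X → ℝ) : Prop :=
  ∀ E : Set X, MeasurableSet E → 0 ≤ μ E

/-- Countable additivity on the σ-algebra. -/
def IsCtblAdd {X : Type*} [MeasurableSpace X] (μ : Set X → ℝ) : Prop :=
  ∀ E : ℕ → Set X, (∀ n, MeasurableSet (E n)) → Pairwise (Disjoint on E) →
    HasSum (fun n => μ (E n)) (μ (⋃ n, E n))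

/-- A nonnegative finitely additive measure is purely finitely additive if the only
countably additive measure `lam` with `0 ≤ lam ≤ μ` is `lam = 0`. -/
def IsPurelyFinAdd {X : Type*} [MeasurableSpace X] (μ : Set X → ℝ) : Prop :=
  ∀ lam : Set X → ℝ, IsFinAdd lam → IsCtblAdd lam →
    (∀ E, MeasurableSet E → 0 ≤ lam E) → (∀ E, MeasurableSet E → lam E ≤ μ E) →
    ∀ E, MeasurableSet E → lam E = 0

/-- The integral of a bounded measurable function with respect to a (finitely additive)
set function, defined by the layer-cake formula. -/
noncomputable def faIntegral {X : Type*} [MeasurableSpace X] (μ : Set X → ℝ) (f : X → ℝ) : ℝ :=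
  (∫ t in Set.Ioi (0:ℝ), μ {x | t < f x}) - (∫ t in Set.Ioi (0:ℝ), μ {x | f x < -t})

/-- The Dirac measure at `y`, as a set function. -/
noncomputable def diracSF (y : ℝ) (E : Set ℝ) : ℝ := E.indicator (fun _ => (1:ℝ)) y

/-- The transition function of CM1: `p(x,·) = x·δ_{x²} + (1-x)·δ₀` on `(0,1)`,
`p(0,·) = δ₀`, `p(1,·) = δ₁` (the formula below specializes correctly at `0` and `1`). -/
noncomputable def p1 (x : ℝ) (E : Set ℝ) : ℝ :=
  x * diracSF (x ^ 2) E + (1 - x) * diracSF 0 E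

/-- The transition function of CM2: `p(x,·) = (1-x)·δ_{x²} + x·δ₀` on `(0,1)`,
`p(0,·) = δ₀`, `p(1,·) = δ₁`. -/
noncomputable def p2 (x : ℝ) (E : Set ℝ) : ℝ :=
  if x = 1 then diracSF 1 E else (1 - x) * diracSF (x ^ 2) E + x * diracSF 0 E

/-- The transition function of CM3: the CM1 rule on `[0,1/2]`, the CM2 rule on `(1/2,1)`,
`p(1,·) = δ₁`. -/
noncomputable def p3 (x : ℝ) (E : Set ℝ) : ℝ :=
  if x = 1 then diracSF 1 E
  else if x ≤ 1 / 2 then x * diracSF (x ^ 2) E + (1 - x) * diracSF 0 E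
  else (1 - x) * diracSF (x ^ 2) E + x * diracSF 0 E

/-- The `n`-step transition function of CM1 (`p1n 0` is the identity kernel, and
`p1n (n+1) x E = ∫ p1n n (y,E) p(x,dy)` is the integral convolution). -/
noncomputable def p1n : ℕ → ℝ → Set ℝ → ℝ
  | 0 => fun x E => diracSF x E
  | n + 1 => fun x E => faIntegral (p1 x) fun y => p1n n y E

/-- The `n`-step transition function of CM2. -/
noncomputable def p2n : ℕ → ℝ → Set ℝ → ℝ
  | 0 => fun x E => diracSF x E
  | n + 1 => fun x E => faIntegral (p2 x) fun y => p2n n y E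

/-- The `n`-step transition function of CM3. -/
noncomputable def p3n : ℕ → ℝ → Set ℝ → ℝ
  | 0 => fun x E => diracSF x E
  | n + 1 => fun x E => faIntegral (p3 x) fun y => p3n n y E


lemma CM1aux.layer_fun_eq (c : ℝ) :
    (fun t : ℝ => if t < c then (1:ℝ) else 0) = (Set.Iio c).indicator (fun _ => (1:ℝ)) := by
  ext t; simp [Set.indicator_apply]

lemma CM1aux.integral_layer (c : ℝ) :
    ∫ t in Set.Ioi (0:ℝ), (if t < c then (1:ℝ) else 0) = max c 0 := by
  rw [CM1aux.layer_fun_eq, setIntegral_indicator measurableSet_Iio, Set.Ioi_inter_Iio,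
    setIntegral_const, measureReal_def, Real.volume_Ioo, smul_eq_mul, mul_one, sub_zero,
    ENNReal.toReal_ofReal']

lemma CM1aux.integrable_layer (c : ℝ) :
    Integrable (fun t => if t < c then (1:ℝ) else 0) (volume.restrict (Set.Ioi 0)) := by
  rw [CM1aux.layer_fun_eq, integrable_indicator_iff measurableSet_Iio]
  refine integrableOn_const ?_
  rw [Measure.restrict_apply measurableSet_Iio, Set.Iio_inter_Ioi]
  simp [Real.volume_Ioo]

lemma CM1aux.diracSF_mem {y : ℝ} {E : Set ℝ} (h : y ∈ E) : diracSF y E = 1 :=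
  Set.indicator_of_mem h _
lemma CM1aux.diracSF_not_mem {y : ℝ} {E : Set ℝ} (h : y ∉ E) : diracSF y E = 0 :=
  Set.indicator_of_notMem h _

lemma CM1aux.max_sub (a : ℝ) : max a 0 - max (-a) 0 = a := by
  rcases le_total a 0 with h | h <;> simp [max_eq_left, max_eq_right, h]

lemma CM1aux.faIntegral_p1 (x : ℝ) (f : ℝ → ℝ) :
    faIntegral (p1 x) f = x * f (x ^ 2) + (1 - x) * f 0 := by
  have h1 : ∀ y : ℝ, (fun t : ℝ => diracSF y {x' | t < f x'}) =
      fun t => if t < f y then (1:ℝ) else 0 := by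
    intro y; ext t
    by_cases h : t < f y
    · rw [if_pos h]; exact CM1aux.diracSF_mem (by simpa using h)
    · rw [if_neg h]; exact CM1aux.diracSF_not_mem (by simpa using h)
  have h2 : ∀ y : ℝ, (fun t : ℝ => diracSF y {x' | f x' < -t}) =
      fun t => if t < -f y then (1:ℝ) else 0 := by
    intro y; ext t
    by_cases h : t < -f y
    · rw [if_pos h]; exact CM1aux.diracSF_mem (by simp only [Set.mem_setOf_eq]; linarith)
    · rw [if_neg h]
      exact CM1aux.diracSF_not_mem (by simp only [Set.mem_setOf_eq]; push_neg; linarith)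
  have e1 : (fun t : ℝ => p1 x {x' | t < f x'}) =
      fun t => x * (if t < f (x ^ 2) then (1:ℝ) else 0) +
        (1 - x) * (if t < f 0 then (1:ℝ) else 0) := by
    ext t; simp only [p1]; rw [congrFun (h1 (x ^ 2)) t, congrFun (h1 0) t]
  have e2 : (fun t : ℝ => p1 x {x' | f x' < -t}) =
      fun t => x * (if t < -f (x ^ 2) then (1:ℝ) else 0) +
        (1 - x) * (if t < -f 0 then (1:ℝ) else 0) := by
    ext t; simp only [p1]; rw [congrFun (h2 (x ^ 2)) t, congrFun (h2 0) t]
  show (∫ t in Set.Ioi (0:ℝ), p1 x {x' | t < f x'}) -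
      (∫ t in Set.Ioi (0:ℝ), p1 x {x' | f x' < -t}) = _
  rw [e1, e2,
    integral_add ((CM1aux.integrable_layer (f (x ^ 2))).const_mul x)
      ((CM1aux.integrable_layer (f 0)).const_mul (1 - x)),
    integral_add ((CM1aux.integrable_layer (-f (x ^ 2))).const_mul x)
      ((CM1aux.integrable_layer (-f 0)).const_mul (1 - x)),
    integral_const_mul, integral_const_mul, integral_const_mul, integral_const_mul,
    CM1aux.integral_layer, CM1aux.integral_layer, CM1aux.integral_layer,
    CM1aux.integral_layer]
  linear_combination x * CM1aux.max_sub (f (x ^ 2)) + (1 - x) * CM1aux.max_sub (f 0)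

lemma CM1aux.p1n_eq : ∀ (n : ℕ) (x : ℝ) (E : Set ℝ),
    p1n n x E = x ^ (2 ^ n - 1) * diracSF (x ^ 2 ^ n) E +
      (1 - x ^ (2 ^ n - 1)) * diracSF 0 E := by
  intro n
  induction n with
  | zero => intro x E; simp [p1n]
  | succ n ih =>
    intro x E
    have h1 : 1 ≤ 2 ^ n := Nat.one_le_two_pow
    have h2 : (2:ℕ) ^ (n + 1) = 2 * 2 ^ n := by rw [pow_succ]; ring
    have hA : 2 * (2 ^ n - 1) = 2 ^ (n + 1) - 2 := by omega
    have hB : 2 ^ (n + 1) - 1 = (2 ^ (n + 1) - 2) + 1 := by omega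
    have h0 : p1n n 0 E = diracSF 0 E := by
      rw [ih 0 E]
      rcases n with _ | m
      · norm_num
      · have hk : 2 ^ (m + 1) - 1 ≠ 0 := by
          have : (2:ℕ) ^ (m + 1) = 2 * 2 ^ m := by rw [pow_succ]; ring
          have := Nat.one_le_two_pow (n := m); omega
        rw [zero_pow hk, zero_pow (by positivity)]
        ring
    show faIntegral (p1 x) (fun y => p1n n y E) = _
    rw [CM1aux.faIntegral_p1, ih (x ^ 2) E, h0, ← pow_mul, ← pow_mul, hA,
      show 2 * 2 ^ n = 2 ^ (n + 1) from h2.symm, hB, pow_succ]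
    ring

lemma CM1aux.diff_eq (n : ℕ) (x₀ : ℝ) (E : Set ℝ) :
    p1n n x₀ E - diracSF 0 E = x₀ ^ (2 ^ n - 1) * (diracSF (x₀ ^ 2 ^ n) E - diracSF 0 E) := by
  rw [CM1aux.p1n_eq]; ring

lemma CM1aux.abs_dirac_diff_le (y z : ℝ) (E : Set ℝ) : |diracSF y E - diracSF z E| ≤ 1 := by
  by_cases hy : y ∈ E <;> by_cases hz : z ∈ E <;>
    simp [CM1aux.diracSF_mem, CM1aux.diracSF_not_mem, hy, hz]

lemma CM1aux.witness (x₀ : ℝ) (h0 : 0 < x₀) (n : ℕ) :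
    |p1n n x₀ {x₀ ^ 2 ^ n} - diracSF 0 {x₀ ^ 2 ^ n}| = x₀ ^ (2 ^ n - 1) := by
  have hb : (0:ℝ) < x₀ ^ 2 ^ n := pow_pos h0 _
  rw [CM1aux.diff_eq, CM1aux.diracSF_mem (Set.mem_singleton _),
    CM1aux.diracSF_not_mem (by rw [Set.mem_singleton_iff]; exact hb.ne)]
  rw [sub_zero, mul_one, abs_of_pos (pow_pos h0 _)]

lemma CM1aux.isLUB_inner (x₀ : ℝ) (hx : x₀ ∈ Set.Ioo (0:ℝ) 1) (n : ℕ) :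
    IsLUB {r : ℝ | ∃ E : Set ℝ, MeasurableSet E ∧ r = |p1n n x₀ E - diracSF 0 E|}
      (x₀ ^ (2 ^ n - 1)) := by
  obtain ⟨h0, h1⟩ := hx
  have ha : (0:ℝ) < x₀ ^ (2 ^ n - 1) := pow_pos h0 _
  constructor
  · rintro r ⟨E, _, rfl⟩
    rw [CM1aux.diff_eq, abs_mul, abs_of_pos ha]
    have := mul_le_mul_of_nonneg_left (CM1aux.abs_dirac_diff_le (x₀ ^ 2 ^ n) 0 E) ha.le
    simpa using this
  · intro c hc
    exact hc ⟨{x₀ ^ 2 ^ n}, measurableSet_singleton _, (CM1aux.witness x₀ h0 n).symm⟩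

/-- Non-uniform strong convergence of CM1: the total variation distance
`‖μ_n - δ₀‖ = sup_E |μ_n(E) - δ₀(E)|` equals `x₀^{2ⁿ-1}`; it tends to `0` for each fixed
`x₀ ∈ (0,1)`, but its supremum over `x₀ ∈ (0,1)` equals `1` for every `n ≥ 1`. -/
theorem cm1_nonuniform_convergence :
    (∀ x₀ ∈ Set.Ioo (0:ℝ) 1, ∀ n : ℕ, 1 ≤ n →
      IsLUB {r : ℝ | ∃ E : Set ℝ, MeasurableSet E ∧ r = |p1n n x₀ E - diracSF 0 E|}
        (x₀ ^ (2 ^ n - 1))) ∧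
    (∀ x₀ ∈ Set.Ioo (0:ℝ) 1,
      Tendsto (fun n : ℕ =>
          sSup {r : ℝ | ∃ E : Set ℝ, MeasurableSet E ∧ r = |p1n n x₀ E - diracSF 0 E|})
        atTop (nhds 0)) ∧
    (∀ n : ℕ, 1 ≤ n →
      IsLUB {r : ℝ | ∃ x₀ ∈ Set.Ioo (0:ℝ) 1, ∃ E : Set ℝ,
        MeasurableSet E ∧ r = |p1n n x₀ E - diracSF 0 E|} 1) := by
  refine ⟨fun x₀ hx n _ => CM1aux.isLUB_inner x₀ hx n, ?_, ?_⟩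
  · intro x₀ hx
    have key : ∀ n : ℕ,
        sSup {r : ℝ | ∃ E : Set ℝ, MeasurableSet E ∧ r = |p1n n x₀ E - diracSF 0 E|} =
          x₀ ^ (2 ^ n - 1) := fun n =>
      (CM1aux.isLUB_inner x₀ hx n).csSup_eq ⟨_, ∅, MeasurableSet.empty, rfl⟩
    have hg : Tendsto (fun n : ℕ => 2 ^ n - 1) atTop atTop :=
      tendsto_atTop_mono (fun n => by simp only [id_eq]; have := Nat.lt_two_pow_self (n := n); omega)
        tendsto_id
    have hlim : Tendsto (fun n : ℕ => x₀ ^ (2 ^ n - 1)) atTop (nhds 0) :=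
      (tendsto_pow_atTop_nhds_zero_of_lt_one hx.1.le hx.2).comp hg
    exact hlim.congr fun n => (key n).symm
  · intro n _
    constructor
    · rintro r ⟨x₀, hx, E, _, rfl⟩
      rw [CM1aux.diff_eq, abs_mul]
      have h1 : |x₀ ^ (2 ^ n - 1)| ≤ 1 := by
        rw [abs_of_pos (pow_pos hx.1 _)]
        exact pow_le_one₀ hx.1.le hx.2.le
      have h2 := CM1aux.abs_dirac_diff_le (x₀ ^ 2 ^ n) 0 E
      calc |x₀ ^ (2 ^ n - 1)| * |diracSF (x₀ ^ 2 ^ n) E - diracSF 0 E| ≤ 1 * 1 :=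
            mul_le_mul h1 h2 (abs_nonneg _) zero_le_one
        _ = 1 := by ring
    · intro c hc
      have hmem : ∀ x₀ ∈ Set.Ioo (0:ℝ) 1, x₀ ^ (2 ^ n - 1) ≤ c := fun x₀ hx =>
        hc ⟨x₀, hx, {x₀ ^ 2 ^ n}, measurableSet_singleton _, (CM1aux.witness x₀ hx.1 n).symm⟩
      have hseq : Tendsto (fun k : ℕ => (1 - ((k:ℝ) + 2)⁻¹) ^ (2 ^ n - 1)) atTop (nhds 1) := by
        have ht : Tendsto (fun k : ℕ => ((k:ℝ) + 2)) atTop atTop :=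
          tendsto_atTop_add_const_right _ 2 tendsto_natCast_atTop_atTop
        have h0 : Tendsto (fun k : ℕ => ((k:ℝ) + 2)⁻¹) atTop (nhds 0) :=
          tendsto_inv_atTop_zero.comp ht
        have := ((tendsto_const_nhds (x := (1:ℝ))).sub h0).pow (2 ^ n - 1)
        simpa using this
      refine le_of_tendsto hseq ?_
      filter_upwards with k
      apply hmem
      have hk : (0:ℝ) < (k:ℝ) + 2 := by positivity
      have hi : (0:ℝ) < ((k:ℝ) + 2)⁻¹ := by positivity
      have hle : ((k:ℝ) + 2)⁻¹ ≤ 2⁻¹ := by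
        apply inv_anti₀ (by norm_num)
        have : (0:ℝ) ≤ (k:ℝ) := Nat.cast_nonneg k
        linarith
      constructor <;> [linarith; linarith]
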